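/- (Contraction of the proximal gradient method toward equilibrium) Suppose f_{x̄} is α-strongly convex and ∇f_{x̄} is L-Lipschitz continuous, with 0 < α ≤ L. Then for every x ∈ E and every step size 0 < η ≤ 1/L, the proximal gradient update x⁺ = prox_{ηr}(x − η∇f_x(x)) satisfies ‖x⁺ − x̄‖ ≤ (√(1 − ηα) + γηβ)·‖x − x̄‖. -/

import Mathlib

open MeasureTheory Set Filter Topology intervalIntegral

noncomputable section

set_option linter.unusedSectionVars false

section Aux
local notation "⟪" x ", " y "⟫" => @inner ℝ _ _ x y
variable {E : Type*} [NormedAddCommGroup E] [InnerProductSpace ℝ E] [CompleteSpace E]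

lemma hasGradientAt_inner_const (c z : E) : HasGradientAt (fun w => ⟪w, c⟫) c z := by
  rw [hasGradientAt_iff_hasFDerivAt]
  have h := (InnerProductSpace.toDual ℝ E c).hasFDerivAt (x := z)
  exact h.congr_of_eventuallyEq (by filter_upwards with w; simp [real_inner_comm])

lemma HasGradientAt.sub' {f g : E → ℝ} {gf gg x : E} (hf : HasGradientAt f gf x)
    (hg : HasGradientAt g gg x) : HasGradientAt (fun z => f z - g z) (gf - gg) x := by
  rw [hasGradientAt_iff_hasFDerivAt] at *
  rw [map_sub]; exact hf.sub hg

lemma hasGradientAt_half_sq (a : ℝ) (z : E) :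
    HasGradientAt (fun y : E => a / 2 * ‖y‖ ^ 2) (a • z) z := by
  rw [hasGradientAt_iff_hasFDerivAt]
  have h1 : HasFDerivAt (𝕜 := ℝ) (id : E → E) (ContinuousLinearMap.id ℝ E) z := hasFDerivAt_id z
  have h2 := (h1.inner ℝ h1).const_mul (a / 2)
  refine h2.congr_of_eventuallyEq ?_ |>.congr_fderiv ?_
  · filter_upwards with w; simp [real_inner_self_eq_norm_sq]
  · ext v
    simp [real_inner_comm, InnerProductSpace.toDual_apply_apply, inner_smul_left]
    ring

lemma convex_grad_lower {f : E → ℝ} (hf : ConvexOn ℝ univ f) {x g : E}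
    (hg : HasGradientAt f g x) (y : E) : f x + ⟪g, y - x⟫ ≤ f y := by
  have hc : HasDerivAt (fun t : ℝ => x + t • (y - x)) (y - x) 0 := by
    simpa using ((hasDerivAt_id (0:ℝ)).smul_const (y - x)).const_add x
  have hφ : HasDerivAt (fun t : ℝ => f (x + t • (y - x))) ⟪g, y - x⟫ 0 := by
    have h0 : HasFDerivAt f (InnerProductSpace.toDual ℝ E g) (x + (0:ℝ) • (y - x)) := by
      simpa using hasGradientAt_iff_hasFDerivAt.mp hg
    have := h0.comp_hasDerivAt 0 hc; simp at this; exact this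
  have hslope : Tendsto (slope (fun t : ℝ => f (x + t • (y - x))) 0) (𝓝[>] 0)
      (𝓝 ⟪g, y - x⟫) :=
    (hasDerivAt_iff_tendsto_slope.mp hφ).mono_left (nhdsWithin_mono _ (by
      intro t ht; exact ne_of_gt ht))
  have hbnd : ∀ᶠ t in 𝓝[>] (0:ℝ), slope (fun t : ℝ => f (x + t • (y - x))) 0 t ≤ f y - f x := by
    filter_upwards [Ioo_mem_nhdsGT_of_mem (Set.mem_Ico.mpr ⟨le_refl _, zero_lt_one⟩)] with t ht
    have h2 := hf.2 (mem_univ x) (mem_univ y) (by linarith [ht.2] : (0:ℝ) ≤ 1 - t)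
      (le_of_lt ht.1) (by ring)
    have hxy : (1 - t) • x + t • y = x + t • (y - x) := by
      rw [smul_sub, sub_smul, one_smul]; abel
    rw [hxy] at h2
    simp only [slope_def_field, smul_eq_mul, zero_smul, add_zero, sub_zero] at *
    rw [div_le_iff₀ ht.1]
    nlinarith [h2]
  have := le_of_tendsto hslope hbnd
  linarith

lemma descent_lemma {f : E → ℝ} {g : E → E} (hg : ∀ z, HasGradientAt f (g z) z)
    {L : ℝ} (hL : 0 ≤ L) (hlip : ∀ u v, ‖g u - g v‖ ≤ L * ‖u - v‖) (x y : E) :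
    f y ≤ f x + ⟪g x, y - x⟫ + L / 2 * ‖y - x‖ ^ 2 := by
  set c : ℝ → E := fun t => x + t • (y - x) with hc
  set ψ : ℝ → ℝ := fun t => ⟪g (c t), y - x⟫ with hψ
  have hcd : ∀ t : ℝ, HasDerivAt c (y - x) t := fun t => by
    simpa [hc] using ((hasDerivAt_id t).smul_const (y - x)).const_add x
  have hφd : ∀ t ∈ uIcc (0:ℝ) 1, HasDerivAt (fun t => f (c t)) (ψ t) t := by
    intro t _
    have h0 : HasFDerivAt f (InnerProductSpace.toDual ℝ E (g (c t))) (c t) :=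
      hasGradientAt_iff_hasFDerivAt.mp (hg (c t))
    have := h0.comp_hasDerivAt t (hcd t); simp at this; exact this
  have hgc : Continuous g := by
    rcases eq_or_lt_of_le hL with h | h
    · have : ∀ u v, g u = g v := fun u v => by
        have := hlip u v; rw [← h] at this
        simpa [norm_le_zero_iff, sub_eq_zero] using this
      exact continuous_const.congr fun u => (this x u)
    · exact (LipschitzWith.of_dist_le_mul (K := ⟨L, hL⟩) (fun u v => by
        rw [dist_eq_norm, dist_eq_norm]; exact hlip u v)).continuous
  have hψc : Continuous ψ := by
    apply Continuous.inner (hgc.comp (by continuity)) continuous_const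
  have hint : IntervalIntegrable ψ MeasureTheory.volume 0 1 :=
    hψc.intervalIntegrable 0 1
  have heq : ∫ t in (0:ℝ)..1, ψ t = f (c 1) - f (c 0) :=
    integral_eq_sub_of_hasDerivAt hφd hint
  have hBc : Continuous (fun t : ℝ => ψ 0 + L * ‖y - x‖ ^ 2 * t) := by continuity
  have hmono : ∫ t in (0:ℝ)..1, ψ t ≤ ∫ t in (0:ℝ)..1, (ψ 0 + L * ‖y - x‖ ^ 2 * t) := by
    apply integral_mono_on zero_le_one hint (hBc.intervalIntegrable 0 1)
    intro t ht
    have h1 : ψ t - ψ 0 = ⟪g (c t) - g (c 0), y - x⟫ := by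
      simp [hψ, inner_sub_left]
    have h2 : ⟪g (c t) - g (c 0), y - x⟫ ≤ ‖g (c t) - g (c 0)‖ * ‖y - x‖ :=
      real_inner_le_norm _ _
    have h3 : ‖g (c t) - g (c 0)‖ ≤ L * (t * ‖y - x‖) := by
      have := hlip (c t) (c 0)
      have hcc : c t - c 0 = t • (y - x) := by simp [hc]
      rw [hcc, norm_smul, Real.norm_eq_abs, abs_of_nonneg ht.1] at this
      exact this
    nlinarith [norm_nonneg (y - x), mul_le_mul_of_nonneg_right h3 (norm_nonneg (y - x))]
  have hval : ∫ t in (0:ℝ)..1, (ψ 0 + L * ‖y - x‖ ^ 2 * t) = ψ 0 + L / 2 * ‖y - x‖ ^ 2 := by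
    have hC : Continuous (fun t : ℝ => L * ‖y - x‖ ^ 2 * t) := by continuity
    rw [integral_add (intervalIntegrable_const) (hC.intervalIntegrable 0 1),
      intervalIntegral.integral_const_mul]
    simp [integral_id]
    ring
  have hc1 : c 1 = y := by simp [hc]
  have hc0 : c 0 = x := by simp [hc]
  have hψ0 : ψ 0 = ⟪g x, y - x⟫ := by simp [hψ, hc0]
  rw [hc1, hc0] at heq
  linarith [hmono.trans_eq hval, heq.symm.le, heq.le, hψ0.le, hψ0.ge]

lemma convexOn_inner_const (w : E) (c : ℝ) : ConvexOn ℝ univ (fun y : E => ⟪y, w⟫ + c) := by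
  refine ⟨convex_univ, fun a _ b _ s t hs ht hst => le_of_eq ?_⟩
  simp only [inner_add_left, real_inner_smul_left, smul_eq_mul]
  have hc : s * c + t * c = c := by rw [← add_mul, hst, one_mul]
  linarith

lemma cocoercive {F : E → ℝ} {g : E → E} (hg : ∀ z, HasGradientAt F (g z) z)
    (hconv : ConvexOn ℝ univ F) {L : ℝ} (hL : 0 < L)
    (hlip : ∀ u v, ‖g u - g v‖ ≤ L * ‖u - v‖) (u v : E) :
    ‖g u - g v‖ ^ 2 ≤ L * ⟪g u - g v, u - v⟫ := by
  have key : ∀ a b : E, F b + ⟪g b, a - b⟫ + 1 / (2 * L) * ‖g a - g b‖ ^ 2 ≤ F a := by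
    intro a b
    set φ : E → ℝ := fun z => F z - ⟪z, g b⟫ with hφ
    have hφg : ∀ z, HasGradientAt φ (g z - g b) z := fun z =>
      (hg z).sub' (hasGradientAt_inner_const (g b) z)
    have hφconv : ConvexOn ℝ univ φ := by
      have := hconv.add (convexOn_inner_const (-(g b)) 0)
      convert this using 1
      · rfl
      funext z; simp [hφ, inner_neg_right]; ring
    have hφlip : ∀ p q, ‖(g p - g b) - (g q - g b)‖ ≤ L * ‖p - q‖ := by
      intro p q; simpa using hlip p q
    -- minimum of φ at b
    have hmin : ∀ y, φ b ≤ φ y := by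
      intro y
      have := convex_grad_lower hφconv (hφg b) y
      simpa using this
    -- descent step from a
    set w : E := a - (1 / L) • (g a - g b) with hw
    have hdesc := descent_lemma hφg (le_of_lt hL) hφlip a w
    have hwa : w - a = -((1 / L) • (g a - g b)) := by simp [hw]
    have h1 : ⟪g a - g b, w - a⟫ = -(1 / L) * ‖g a - g b‖ ^ 2 := by
      rw [hwa, inner_neg_right, real_inner_smul_right, real_inner_self_eq_norm_sq]
      ring
    have h2 : ‖w - a‖ ^ 2 = (1 / L) ^ 2 * ‖g a - g b‖ ^ 2 := by
      rw [hwa, norm_neg, norm_smul, mul_pow, Real.norm_eq_abs, sq_abs]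
    have h3 : φ b ≤ φ w := hmin w
    rw [h1, h2] at hdesc
    have hφa : φ a = F a - ⟪a, g b⟫ := rfl
    have hφb : φ b = F b - ⟪b, g b⟫ := rfl
    have hL' : L ≠ 0 := ne_of_gt hL
    have hib : ⟪g b, a - b⟫ = ⟪a, g b⟫ - ⟪b, g b⟫ := by
      rw [inner_sub_right]; rw [real_inner_comm (g b) a, real_inner_comm (g b) b]
    have : φ b ≤ φ a - 1 / (2 * L) * ‖g a - g b‖ ^ 2 := by
      refine h3.trans (hdesc.trans_eq ?_)
      field_simp
      ring
    rw [hφa, hφb] at this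
    rw [hib]
    linarith
  have k1 := key u v
  have k2 := key v u
  have hsymm : ‖g v - g u‖ = ‖g u - g v‖ := norm_sub_rev _ _
  rw [hsymm] at k2
  have e1 : ⟪g v, u - v⟫ + ⟪g u, v - u⟫ = -⟪g u - g v, u - v⟫ := by
    simp [inner_sub_left, inner_sub_right]; ring
  have hL' : (0:ℝ) < 2 * L := by linarith
  have : 2 * (1 / (2 * L)) * ‖g u - g v‖ ^ 2 ≤ ⟪g u - g v, u - v⟫ := by linarith
  calc ‖g u - g v‖ ^ 2 = ‖g u - g v‖ ^ 2 := rfl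
      _ = L * (2 * (1 / (2 * L)) * ‖g u - g v‖ ^ 2) := by field_simp
      _ ≤ L * ⟪g u - g v, u - v⟫ := by
        exact mul_le_mul_of_nonneg_left this (le_of_lt hL)

lemma sc_growth {h : E → ℝ} {m : ℝ}
    (hsc : ConvexOn ℝ univ (fun y => h y - m / 2 * ‖y‖ ^ 2))
    {p : E} (hp : ∀ y, h p ≤ h y) (y : E) :
    h p + m / 2 * ‖y - p‖ ^ 2 ≤ h y := by
  have S : StrongConvexOn univ m h := strongConvexOn_iff_convex.mpr hsc
  have key : ∀ t : ℝ, t ∈ Ioo (0:ℝ) 1 →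
      h p + (1 - t) * (m / 2 * ‖y - p‖ ^ 2) ≤ h y := by
    intro t ht
    have h2 := S.2 (mem_univ y) (mem_univ p) (le_of_lt ht.1)
      (by linarith [ht.2] : (0:ℝ) ≤ 1 - t) (by ring)
    have h3 := hp (t • y + (1 - t) • p)
    simp only [smul_eq_mul] at h2
    have := h3.trans h2
    have ht0 : 0 < t := ht.1
    nlinarith [this]
  have htend : Tendsto (fun t : ℝ => h p + (1 - t) * (m / 2 * ‖y - p‖ ^ 2)) (𝓝[>] 0)
      (𝓝 (h p + m / 2 * ‖y - p‖ ^ 2)) := by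
    have : Tendsto (fun t : ℝ => h p + (1 - t) * (m / 2 * ‖y - p‖ ^ 2)) (𝓝 0)
        (𝓝 (h p + (1 - 0) * (m / 2 * ‖y - p‖ ^ 2))) := by
      apply Continuous.tendsto; continuity
    simpa using this.mono_left nhdsWithin_le_nhds
  refine le_of_tendsto htend ?_
  filter_upwards [Ioo_mem_nhdsGT_of_mem (Set.mem_Ico.mpr ⟨le_refl _, zero_lt_one⟩)] with t ht
  exact key t ht

lemma prox_nonexpansive {r : E → ℝ} (hr : ConvexOn ℝ univ r) {η : ℝ} (hη : 0 < η)
    {u v p q : E}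
    (hp : ∀ y, r p + 1 / (2 * η) * ‖p - u‖ ^ 2 ≤ r y + 1 / (2 * η) * ‖y - u‖ ^ 2)
    (hq : ∀ y, r q + 1 / (2 * η) * ‖q - v‖ ^ 2 ≤ r y + 1 / (2 * η) * ‖y - v‖ ^ 2) :
    ‖p - q‖ ≤ ‖u - v‖ := by
  have hη' : (η:ℝ) ≠ 0 := ne_of_gt hη
  -- strong convexity of the prox objectives with modulus 1/η
  have hconv : ∀ w : E, ConvexOn ℝ univ
      (fun y => (r y + 1 / (2 * η) * ‖y - w‖ ^ 2) - (1/η) / 2 * ‖y‖ ^ 2) := by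
    intro w
    have := hr.add (convexOn_inner_const (-(1/η) • w) (1 / (2 * η) * ‖w‖ ^ 2))
    convert this using 1
    · rfl
    funext y
    have h1 : ‖y - w‖ ^ 2 = ‖y‖ ^ 2 - 2 * ⟪y, w⟫ + ‖w‖ ^ 2 := norm_sub_sq_real y w
    simp only [Pi.add_apply, real_inner_smul_right, h1]
    field_simp
    ring
  have g1 := fun y => sc_growth (hconv u) (m := 1/η)
    (p := p) (fun y => hp y) y
  have g2 := fun y => sc_growth (hconv v) (m := 1/η)
    (p := q) (fun y => hq y) y
  have G1 := g1 q
  have G2 := g2 p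
  -- expand and combine
  have e1 : ‖p - u‖ ^ 2 = ‖p‖^2 - 2*⟪p,u⟫ + ‖u‖^2 := norm_sub_sq_real p u
  have e2 : ‖q - u‖ ^ 2 = ‖q‖^2 - 2*⟪q,u⟫ + ‖u‖^2 := norm_sub_sq_real q u
  have e3 : ‖p - v‖ ^ 2 = ‖p‖^2 - 2*⟪p,v⟫ + ‖v‖^2 := norm_sub_sq_real p v
  have e4 : ‖q - v‖ ^ 2 = ‖q‖^2 - 2*⟪q,v⟫ + ‖v‖^2 := norm_sub_sq_real q v
  have e5 : ‖q - p‖ ^ 2 = ‖p - q‖ ^ 2 := by rw [norm_sub_rev]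
  have e6 : ⟪p - q, u - v⟫ = ⟪p,u⟫ - ⟪p,v⟫ - ⟪q,u⟫ + ⟪q,v⟫ := by
    simp [inner_sub_left, inner_sub_right]; ring
  have key : ‖p - q‖ ^ 2 ≤ ⟪p - q, u - v⟫ := by
    have hs : (0:ℝ) < 1 / (2 * η) := by positivity
    have hd : 1 / η / 2 = 1 / (2 * η) := by rw [div_div, mul_comm]
    rw [e1, e2, e5, hd] at G1
    rw [e3, e4, hd] at G2
    have hsum : (1/(2*η)) * ((‖p‖^2 - 2*⟪p,u⟫ + ‖u‖^2) + (‖q‖^2 - 2*⟪q,v⟫ + ‖v‖^2) + 2*‖p-q‖^2)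
        ≤ (1/(2*η)) * ((‖q‖^2 - 2*⟪q,u⟫ + ‖u‖^2) + (‖p‖^2 - 2*⟪p,v⟫ + ‖v‖^2)) := by
      nlinarith [G1, G2]
    have D := (mul_le_mul_iff_right₀ hs).mp hsum
    rw [e6]; linarith [D]
  have hn := real_inner_le_norm (p - q) (u - v)
  nlinarith [norm_nonneg (p - q), norm_nonneg (u - v), key.trans hn]

lemma shift_bound {Z : Type*} [MeasurableSpace Z] [MetricSpace Z]
    (G : Z → E) (β c : ℝ) (hβ : 0 ≤ β) (hc : 0 ≤ c)
    (μ ν : Measure Z) (hμ : Integrable G μ) (hν : Integrable G ν)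
    (hlipG : ∀ z z', ‖G z - G z'‖ ≤ β * dist z z')
    (hKR : ∀ g : Z → ℝ, LipschitzWith 1 g → |(∫ z, g z ∂μ) - ∫ z, g z ∂ν| ≤ c) :
    ‖(∫ z, G z ∂μ) - ∫ z, G z ∂ν‖ ≤ β * c := by
  set w := (∫ z, G z ∂μ) - ∫ z, G z ∂ν with hw
  by_cases hw0 : w = 0
  · rw [hw0]; simpa using mul_nonneg hβ hc
  have he : ‖(‖w‖⁻¹ • w)‖ = 1 := norm_smul_inv_norm hw0
  set e := ‖w‖⁻¹ • w with hedef
  have hkey : ∀ ε : ℝ, 0 < ε → ‖w‖ ≤ (β + ε) * c := by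
    intro ε hε
    have hβε : 0 < β + ε := by linarith
    set g : Z → ℝ := fun z => (β + ε)⁻¹ * ⟪e, G z⟫ with hg
    have hglip : LipschitzWith 1 g := by
      apply LipschitzWith.of_dist_le_mul
      intro z z'
      rw [Real.dist_eq]
      have hgz : g z - g z' = (β + ε)⁻¹ * ⟪e, G z - G z'⟫ := by
        simp only [hg, inner_sub_right]; ring
      rw [hgz, abs_mul, abs_of_pos (by positivity : (0:ℝ) < (β+ε)⁻¹)]
      have h1 : |⟪e, G z - G z'⟫| ≤ ‖G z - G z'‖ := by
        have := abs_real_inner_le_norm e (G z - G z')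
        simpa [he] using this
      have h2 := hlipG z z'
      push_cast
      rw [one_mul]
      calc (β+ε)⁻¹ * |⟪e, G z - G z'⟫| ≤ (β+ε)⁻¹ * (β * dist z z') :=
            mul_le_mul_of_nonneg_left (h1.trans h2) (by positivity)
        _ ≤ dist z z' := by
            rw [inv_mul_le_iff₀ hβε]
            have h0 : (0:ℝ) ≤ dist z z' := dist_nonneg
            nlinarith
    have hKRg := hKR g hglip
    have hi1 : ∫ z, g z ∂μ = (β+ε)⁻¹ * ⟪e, ∫ z, G z ∂μ⟫ := by
      rw [hg]; rw [MeasureTheory.integral_const_mul, integral_inner hμ]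
    have hi2 : ∫ z, g z ∂ν = (β+ε)⁻¹ * ⟪e, ∫ z, G z ∂ν⟫ := by
      rw [hg]; rw [MeasureTheory.integral_const_mul, integral_inner hν]
    have hiw : ⟪e, ∫ z, G z ∂μ⟫ - ⟪e, ∫ z, G z ∂ν⟫ = ‖w‖ := by
      rw [← inner_sub_right, ← hw, hedef, real_inner_smul_left, real_inner_self_eq_norm_sq, sq]
      have : ‖w‖ ≠ 0 := norm_ne_zero_iff.mpr hw0
      field_simp
    rw [hi1, hi2, ← mul_sub, abs_mul, hiw,
      abs_of_pos (by positivity : (0:ℝ) < (β+ε)⁻¹), abs_of_nonneg (norm_nonneg w)] at hKRg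
    calc ‖w‖ = (β+ε) * ((β+ε)⁻¹ * ‖w‖) := by field_simp
      _ ≤ (β+ε)*c := mul_le_mul_of_nonneg_left hKRg (le_of_lt hβε)
  by_cases hc0 : c = 0
  · have := hkey 1 one_pos
    simp only [hc0, mul_zero] at this ⊢
    exact this
  · have hcpos : 0 < c := lt_of_le_of_ne hc (Ne.symm hc0)
    refine le_of_forall_pos_le_add ?_
    intro ε hε
    have := hkey (ε / c) (by positivity)
    calc ‖w‖ ≤ (β + ε/c)*c := this
      _ = β*c + ε := by field_simp

end Aux

section Main
local notation "⟪" x ", " y "⟫" => @inner ℝ _ _ x y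

/-- **Contraction of repeated minimization toward equilibrium.** If `f_{xbar}` is `α`-strongly
convex, then any minimizer `xp` of `f_x + r` satisfies `‖xp − xbar‖ ≤ (γβ/α)‖x − xbar‖`. -/
theorem repeated_minimization_contraction
    {E : Type*} [NormedAddCommGroup E] [InnerProductSpace ℝ E] [FiniteDimensional ℝ E]
    {Z : Type*} [MetricSpace Z] [MeasurableSpace Z] [BorelSpace Z]
    (ℓ : E → Z → ℝ) (G : E → Z → E) (β γ : ℝ) (hβ : 0 ≤ β) (hγ : 0 ≤ γ)
    (hgrad : ∀ (x : E) (z : Z), HasGradientAt (fun x' => ℓ x' z) (G x z) x)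
    (hlip : ∀ (x : E) (z z' : Z), ‖G x z - G x z'‖ ≤ β * dist z z')
    (D : E → Measure Z) (hD : ∀ x : E, IsProbabilityMeasure (D x))
    (hint : ∀ x y : E, Integrable (fun z => ℓ y z) (D x))
    (hintG : ∀ x y : E, Integrable (fun z => G y z) (D x))
    (f : E → E → ℝ) (Gf : E → E → E)
    (hfdef : ∀ x y : E, f x y = ∫ z, ℓ y z ∂(D x))
    (hGfdef : ∀ x y : E, Gf x y = ∫ z, G y z ∂(D x))
    (hfgrad : ∀ x y : E, HasGradientAt (f x) (Gf x y) y)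
    (hDlip : ∀ x y : E, ∀ g : Z → ℝ, LipschitzWith 1 g →
      |(∫ z, g z ∂(D x)) - ∫ z, g z ∂(D y)| ≤ γ * ‖x - y‖)
    (r : E → ℝ) (hr : ConvexOn ℝ univ r)
    (xbar : E) (hxbar : ∀ y : E, f xbar xbar + r xbar ≤ f xbar y + r y)
    (α : ℝ) (hα : 0 < α)
    (hsc : ConvexOn ℝ univ (fun y => f xbar y - α / 2 * ‖y‖ ^ 2))
    (L : ℝ) (hαL : α ≤ L)
    (hLip : ∀ u v : E, ‖Gf xbar u - Gf xbar v‖ ≤ L * ‖u - v‖)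
    (x : E) (η : ℝ) (hη0 : 0 < η) (hηL : η ≤ 1 / L)
    (xp : E) (hxp : ∀ y : E, r xp + 1 / (2 * η) * ‖xp - (x - η • Gf x x)‖ ^ 2
      ≤ r y + 1 / (2 * η) * ‖y - (x - η • Gf x x)‖ ^ 2) :
    ‖xp - xbar‖ ≤ (Real.sqrt (1 - η * α) + γ * η * β) * ‖x - xbar‖ := by
  have hL0 : 0 < L := lt_of_lt_of_le hα hαL
  have hηL1 : η * L ≤ 1 := by
    rw [le_div_iff₀ hL0] at hηL; exact hηL
  have hηα : η * α ≤ 1 := le_trans (mul_le_mul_of_nonneg_left hαL hη0.le) hηL1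
  have h1ηα : (0:ℝ) ≤ 1 - η * α := by linarith
  have SC : StrongConvexOn univ α (f xbar) := strongConvexOn_iff_convex.mpr hsc
  have Fconv : ConvexOn ℝ univ (f xbar) := strongConvexOn_zero.mp (SC.mono hα.le)
  have hQg : ∀ z : E, HasGradientAt (fun y => f xbar y - α/2 * ‖y‖^2) (Gf xbar z - α • z) z :=
    fun z => HasGradientAt.sub' (hfgrad xbar z) (hasGradientAt_half_sq α z)
  have mono : ∀ u v : E, α * ‖u - v‖^2 ≤ ⟪Gf xbar u - Gf xbar v, u - v⟫ := by
    intro u v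
    have h1 := convex_grad_lower hsc (hQg u) v
    have h2 := convex_grad_lower hsc (hQg v) u
    have e1 : ⟪Gf xbar u - α • u, v - u⟫
        = ⟪Gf xbar u, v⟫ - ⟪Gf xbar u, u⟫ - α * ⟪u, v⟫ + α * ⟪u, u⟫ := by
      simp [inner_sub_left, inner_sub_right, real_inner_smul_left]; ring
    have e2 : ⟪Gf xbar v - α • v, u - v⟫
        = ⟪Gf xbar v, u⟫ - ⟪Gf xbar v, v⟫ - α * ⟪v, u⟫ + α * ⟪v, v⟫ := by
      simp [inner_sub_left, inner_sub_right, real_inner_smul_left]; ring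
    have e3 : ⟪Gf xbar u - Gf xbar v, u - v⟫
        = ⟪Gf xbar u, u⟫ - ⟪Gf xbar u, v⟫ - ⟪Gf xbar v, u⟫ + ⟪Gf xbar v, v⟫ := by
      simp [inner_sub_left, inner_sub_right]; ring
    have e4 : ‖u - v‖^2 = ⟪u,u⟫ - ⟪u,v⟫ - ⟪v,u⟫ + ⟪v,v⟫ := by
      rw [← real_inner_self_eq_norm_sq]; simp only [inner_sub_left, inner_sub_right]; ring
    rw [e1] at h1; rw [e2] at h2; rw [e3, e4]
    have hcomm : ⟪u,v⟫ = ⟪v,u⟫ := real_inner_comm v u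
    nlinarith [h1, h2, hcomm]
  have coco := cocoercive (fun z => hfgrad xbar z) Fconv hL0 hLip x xbar
  have hmxx := mono x xbar
  have step : ‖(x - η • Gf xbar x) - (xbar - η • Gf xbar xbar)‖^2
      ≤ (1 - η*α) * ‖x - xbar‖^2 := by
    have hd : (x - η • Gf xbar x) - (xbar - η • Gf xbar xbar)
        = (x - xbar) - η • (Gf xbar x - Gf xbar xbar) := by
      rw [smul_sub]; abel
    rw [hd, norm_sub_sq_real, real_inner_smul_right]
    have h2 : ‖η • (Gf xbar x - Gf xbar xbar)‖^2 = η^2 * ‖Gf xbar x - Gf xbar xbar‖^2 := by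
      rw [norm_smul, Real.norm_eq_abs, mul_pow, sq_abs]
    rw [h2]
    have hsym : ⟪x - xbar, Gf xbar x - Gf xbar xbar⟫ = ⟪Gf xbar x - Gf xbar xbar, x - xbar⟫ :=
      real_inner_comm _ _
    rw [hsym]
    have hnn : (0:ℝ) ≤ ⟪Gf xbar x - Gf xbar xbar, x - xbar⟫ :=
      le_trans (by positivity) hmxx
    nlinarith [mul_le_mul_of_nonneg_left coco (sq_nonneg η),
      mul_le_mul_of_nonneg_left hmxx hη0.le,
      mul_nonneg (mul_nonneg hη0.le hnn) (by linarith : (0:ℝ) ≤ 1 - η * L)]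
  have step_norm : ‖(x - η • Gf xbar x) - (xbar - η • Gf xbar xbar)‖
      ≤ Real.sqrt (1 - η*α) * ‖x - xbar‖ := by
    have h1 := Real.sqrt_le_sqrt step
    rwa [Real.sqrt_sq (norm_nonneg _), Real.sqrt_mul h1ηα, Real.sqrt_sq (norm_nonneg _)] at h1
  have hv : ∀ y : E, r xbar + 1 / (2 * η) * ‖xbar - (xbar - η • Gf xbar xbar)‖ ^ 2
      ≤ r y + 1 / (2 * η) * ‖y - (xbar - η • Gf xbar xbar)‖ ^ 2 := by
    intro y
    have hdesc := descent_lemma (fun z => hfgrad xbar z) hL0.le hLip xbar y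
    have hopt := hxbar y
    have hL2' : L / 2 * ‖y - xbar‖^2 ≤ 1 / (2*η) * ‖y - xbar‖^2 := by
      apply mul_le_mul_of_nonneg_right _ (sq_nonneg _)
      rw [div_le_div_iff₀ two_pos (by linarith : (0:ℝ) < 2*η)]
      nlinarith
    have e1 : xbar - (xbar - η • Gf xbar xbar) = η • Gf xbar xbar := by abel
    have e2 : y - (xbar - η • Gf xbar xbar) = (y - xbar) + η • Gf xbar xbar := by abel
    have hdiff : 1 / (2*η) * ‖(y - xbar) + η • Gf xbar xbar‖^2
        - 1 / (2*η) * ‖η • Gf xbar xbar‖^2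
        = 1 / (2*η) * ‖y - xbar‖^2 + ⟪y - xbar, Gf xbar xbar⟫ := by
      rw [norm_add_sq_real, real_inner_smul_right]
      have h3 : ‖η • Gf xbar xbar‖^2 = η^2 * ‖Gf xbar xbar‖^2 := by
        rw [norm_smul, Real.norm_eq_abs, mul_pow, sq_abs]
      rw [h3]
      field_simp
      ring
    have hsym : ⟪Gf xbar xbar, y - xbar⟫ = ⟪y - xbar, Gf xbar xbar⟫ := real_inner_comm _ _
    rw [e1, e2]
    linarith [hdiff, hdesc, hopt, hL2', hsym]
  have hprox : ‖xp - xbar‖ ≤ ‖(x - η • Gf x x) - (xbar - η • Gf xbar xbar)‖ :=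
    prox_nonexpansive hr hη0 hxp hv
  have hshift : ‖Gf x x - Gf xbar x‖ ≤ β * (γ * ‖x - xbar‖) := by
    rw [hGfdef x x, hGfdef xbar x]
    exact shift_bound (G x) β (γ * ‖x - xbar‖) hβ (by positivity)
      (D x) (D xbar) (hintG x x) (hintG xbar x) (fun z z' => hlip x z z')
      (fun g hg => hDlip x xbar g hg)
  have hsplit : (x - η • Gf x x) - (xbar - η • Gf xbar xbar)
      = ((x - η • Gf xbar x) - (xbar - η • Gf xbar xbar)) - η • (Gf x x - Gf xbar x) := by
    rw [smul_sub]; abel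
  calc ‖xp - xbar‖ ≤ ‖(x - η • Gf x x) - (xbar - η • Gf xbar xbar)‖ := hprox
    _ ≤ ‖(x - η • Gf xbar x) - (xbar - η • Gf xbar xbar)‖ + ‖η • (Gf x x - Gf xbar x)‖ := by
        rw [hsplit]; exact norm_sub_le _ _
    _ ≤ Real.sqrt (1 - η*α) * ‖x - xbar‖ + η * (β * (γ * ‖x - xbar‖)) := by
        apply add_le_add step_norm
        rw [norm_smul, Real.norm_eq_abs, abs_of_pos hη0]
        exact mul_le_mul_of_nonneg_left hshift hη0.le
    _ = (Real.sqrt (1 - η * α) + γ * η * β) * ‖x - xbar‖ := by ring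

end Main
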